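/- Let f : ℝ^{n_x} × ℝ^{n_p} × [0,T] → ℝ^{n_x} define the initial value problem ẋ(t) = f(x(t), p, t), x(0) = x₀, with solution x(t,p) on [0,T], where x₀ does not depend on p. If the partial derivatives d_x f and d_p f exist and are continuous in a neighborhood of the solution x(t) for t ∈ [0,T], then the transposed parameter sensitivity satisfies d_p x(T,p)^⊤ = ∫₀^T d_p f(x(t), p, t)^⊤ λ(t) dt, where λ(t) ∈ ℝ^{n_x × n_x} solves the adjoint system λ̇(t) = − d_x f(x(t), p, t)^⊤ λ(t) for t ∈ [0,T] with terminal condition λ(T) = I (the n_x × n_x identity matrix). -/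

import Mathlib

open Matrix Set

noncomputable def matCLM (m n : ℕ) : Matrix (Fin m) (Fin n) ℝ →ₗ[ℝ] ((Fin n → ℝ) →L[ℝ] (Fin m → ℝ)) where
  toFun M := LinearMap.toContinuousLinearMap M.mulVecLin
  map_add' M N := by ext v i; simp [Matrix.add_mulVec]
  map_smul' c M := by ext v i; simp [Matrix.smul_mulVec]

lemma matCLM_cont (m n : ℕ) : Continuous (matCLM m n) :=
  (matCLM m n).continuous_of_finiteDimensional

lemma gronwall_aux {K ε T t : ℝ} (hK : 0 < K) (hε : 0 ≤ ε) (ht : 0 ≤ t) (htT : t ≤ T) :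
    gronwallBound 0 K ε t ≤ ε / K * (Real.exp (K * T) - 1) := by
  rw [gronwallBound_of_K_ne_0 hK.ne']
  have h1 : Real.exp (K * t) ≤ Real.exp (K * T) := Real.exp_le_exp.2 (by nlinarith)
  have h2 : (0:ℝ) ≤ ε / K := div_nonneg hε hK.le
  nlinarith [Real.one_le_exp (by positivity : (0:ℝ) ≤ K * t)]

set_option maxHeartbeats 1000000 in
/-- **Adjoint system.** Under existence and continuity of the partial Jacobians `d_x f` and
`d_p f` in a neighborhood of the solution of `ẋ = f(x, p, t)`, `x(0) = x₀` (with `x₀`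
independent of `p`), the transposed parameter sensitivity satisfies
`d_p x(T, p)ᵀ = ∫₀ᵀ d_p f(x(t), p, t)ᵀ λ(t) dt`, where the matrix-valued `λ` solves the
adjoint system `λ̇(t) = − d_x f(x(t), p, t)ᵀ λ(t)`, `λ(T) = I`. -/
theorem adjoint_system
    (nx np : ℕ) (T : ℝ) (hT : 0 < T)
    (f : (Fin nx → ℝ) → (Fin np → ℝ) → ℝ → (Fin nx → ℝ))
    (x : ℝ → (Fin np → ℝ) → (Fin nx → ℝ))
    (x0 : Fin nx → ℝ) (p : Fin np → ℝ)
    -- the initial value does not depend on the parameter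
    (hinit : ∀ q : Fin np → ℝ, x 0 q = x0)
    -- f(·, q, ·) is Lipschitz continuous on ℝ^{n_x} × [0,T] for every q
    (hLip : ∀ q : Fin np → ℝ, ∃ L : NNReal,
      LipschitzOnWith L (fun u : (Fin nx → ℝ) × ℝ => f u.1 q u.2)
        (Set.univ ×ˢ Set.Icc (0 : ℝ) T))
    -- x(·, q) solves the initial value problem on [0, T]
    (hsol : ∀ q : Fin np → ℝ, ∀ t ∈ Set.Icc (0:ℝ) T,
      HasDerivAt (fun s => x s q) (f (x t q) q t) t)
    -- the Jacobians d_x f and d_p f exist and are continuous in a neighborhood U of the solution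
    (U : Set ((Fin nx → ℝ) × (Fin np → ℝ) × ℝ)) (hUopen : IsOpen U)
    (hUtraj : ∀ t ∈ Set.Icc (0:ℝ) T, (x t p, p, t) ∈ U)
    (dxf : (Fin nx → ℝ) → (Fin np → ℝ) → ℝ → Matrix (Fin nx) (Fin nx) ℝ)
    (dpf : (Fin nx → ℝ) → (Fin np → ℝ) → ℝ → Matrix (Fin nx) (Fin np) ℝ)
    (hdxf : ∀ u ∈ U, HasFDerivAt (fun y => f y u.2.1 u.2.2)
      (LinearMap.toContinuousLinearMap (dxf u.1 u.2.1 u.2.2).mulVecLin) u.1)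
    (hdpf : ∀ u ∈ U, HasFDerivAt (fun q => f u.1 q u.2.2)
      (LinearMap.toContinuousLinearMap (dpf u.1 u.2.1 u.2.2).mulVecLin) u.2.1)
    (hcont : ContinuousOn (fun u : (Fin nx → ℝ) × (Fin np → ℝ) × ℝ =>
        (dxf u.1 u.2.1 u.2.2, dpf u.1 u.2.1 u.2.2)) U)
    -- λ solves the adjoint system λ̇ = −(d_x f)ᵀ λ on [0, T] with λ(T) = I
    (lam : ℝ → Matrix (Fin nx) (Fin nx) ℝ)
    (hlamT : lam T = 1)
    (hlam : ∀ t ∈ Set.Icc (0:ℝ) T, ∀ i j,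
      HasDerivAt (fun s => lam s i j) ((-((dxf (x t p) p t)ᵀ * lam t)) i j) t) :
    -- the sensitivity d_p x(T, p) exists and its transpose is given by the integral formula
    DifferentiableAt ℝ (fun q => x T q) p ∧
    ∀ i j, (LinearMap.toMatrix' (fderiv ℝ (fun q => x T q) p).toLinearMap)ᵀ i j
      = ∫ t in (0:ℝ)..T, ((dpf (x t p) p t)ᵀ * lam t) i j := by
  have hT0 : (0:ℝ) ≤ T := hT.le
  have hIcc : Set.uIcc (0:ℝ) T = Set.Icc 0 T := Set.uIcc_of_le hT0
  -- continuity of trajectories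
  have hxc : ∀ q, ContinuousOn (fun t => x t q) (Set.Icc 0 T) :=
    fun q t ht => ((hsol q t ht).continuousAt).continuousWithinAt
  have htrajc : ContinuousOn (fun t => (x t p, p, t)) (Set.Icc 0 T) :=
    (hxc p).prodMk (continuousOn_const.prodMk continuousOn_id)
  -- continuity of f along any trajectory
  have hFc : ∀ q, ContinuousOn (fun t => f (x t q) q t) (Set.Icc 0 T) := by
    intro q
    obtain ⟨L, hL⟩ := hLip q
    exact hL.continuousOn.comp ((hxc q).prodMk continuousOn_id)
      (fun t ht => ⟨trivial, ht⟩)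
  -- the tube
  obtain ⟨r0, hr0, hr0sub⟩ :
      ∃ r0 > 0, Metric.thickening r0 ((fun t => (x t p, p, t)) '' Set.Icc 0 T) ⊆ U := by
    refine (isCompact_Icc.image_of_continuousOn htrajc).exists_thickening_subset_open hUopen ?_
    rintro _ ⟨t, ht, rfl⟩; exact hUtraj t ht
  set r : ℝ := r0 / 2 with hrdef
  have hr : 0 < r := by positivity
  have hVU : ∀ y q t, t ∈ Set.Icc (0:ℝ) T → dist y (x t p) ≤ r → dist q p ≤ r →
      (y, q, t) ∈ U := by
    intro y q t ht h1 h2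
    apply hr0sub
    rw [Metric.mem_thickening_iff]
    refine ⟨(x t p, p, t), ⟨t, ht, rfl⟩, ?_⟩
    have : dist ((y, q, t)) ((x t p, p, t)) ≤ r := by
      rw [Prod.dist_eq, Prod.dist_eq]
      simp only [dist_self]
      exact max_le h1 (max_le h2 hr.le)
    linarith
  set V : Set ((Fin nx → ℝ) × (Fin np → ℝ) × ℝ) :=
    {u | u.2.2 ∈ Set.Icc (0:ℝ) T ∧ dist u.1 (x u.2.2 p) ≤ r ∧ dist u.2.1 p ≤ r} with hVdef
  have hVU' : V ⊆ U := fun u hu => hVU u.1 u.2.1 u.2.2 hu.1 hu.2.1 hu.2.2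
  have hVcpt : IsCompact V := by
    have himg : V = (fun w : ℝ × (Fin nx → ℝ) × (Fin np → ℝ) =>
        (x w.1 p + w.2.1, w.2.2, w.1)) ''
        (Set.Icc 0 T ×ˢ Metric.closedBall 0 r ×ˢ Metric.closedBall p r) := by
      ext ⟨y, q, t⟩
      constructor
      · rintro ⟨ht, hy, hq⟩
        refine ⟨(t, y - x t p, q), ⟨ht, ?_, hq⟩, by simp⟩
        simpa [Metric.mem_closedBall, dist_eq_norm] using hy
      · rintro ⟨⟨t', z, q'⟩, ⟨ht, hz, hq⟩, heq⟩
        simp only [Prod.mk.injEq] at heq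
        obtain ⟨hy, rfl, rfl⟩ := heq
        refine ⟨ht, ?_, hq⟩
        rw [← hy]
        simpa [dist_eq_norm] using mem_closedBall_zero_iff.1 hz
    rw [himg]
    refine (isCompact_Icc.prod ((isCompact_closedBall _ _).prod
      (isCompact_closedBall _ _))).image_of_continuousOn ?_
    refine ContinuousOn.prodMk ?_ (ContinuousOn.prodMk ?_ ?_)
    · exact (((hxc p).comp continuousOn_fst (fun w hw => hw.1)).add
        (continuous_snd.fst.continuousOn))
    · exact continuous_snd.snd.continuousOn
    · exact continuous_fst.continuousOn
  have hVtraj : ∀ t ∈ Set.Icc (0:ℝ) T, (x t p, p, t) ∈ V :=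
    fun t ht => ⟨ht, by simpa using hr.le, by simpa using hr.le⟩
  -- the derivative map, as continuous linear maps
  set G : (Fin nx → ℝ) × (Fin np → ℝ) × ℝ →
      ((Fin nx → ℝ) →L[ℝ] (Fin nx → ℝ)) × ((Fin np → ℝ) →L[ℝ] (Fin nx → ℝ)) :=
    fun u => (matCLM nx nx (dxf u.1 u.2.1 u.2.2), matCLM nx np (dpf u.1 u.2.1 u.2.2)) with hGdef
  have hGc : ContinuousOn G U :=
    ((matCLM_cont nx nx).prodMap (matCLM_cont nx np)).comp_continuousOn hcont
  -- bounds on the derivatives over the tube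
  obtain ⟨Ma, hMapos, hMa⟩ : ∃ Ma : ℝ, 0 < Ma ∧ ∀ u ∈ V, ‖(G u).1‖ ≤ Ma := by
    obtain ⟨c, hc⟩ := hVcpt.exists_bound_of_continuousOn (hGc.mono hVU').fst
    exact ⟨|c| + 1, by positivity, fun u hu => by
      have := hc u hu; have := le_abs_self c; linarith⟩
  obtain ⟨Mb, hMbpos, hMb⟩ : ∃ Mb : ℝ, 0 < Mb ∧ ∀ u ∈ V, ‖(G u).2‖ ≤ Mb := by
    obtain ⟨c, hc⟩ := hVcpt.exists_bound_of_continuousOn (hGc.mono hVU').snd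
    exact ⟨|c| + 1, by positivity, fun u hu => by
      have := hc u hu; have := le_abs_self c; linarith⟩
  -- coarse mean value estimates
  have key1 : ∀ t ∈ Set.Icc (0:ℝ) T, ∀ q, dist q p ≤ r →
      ∀ y₁ ∈ Metric.closedBall (x t p) r, ∀ y₂ ∈ Metric.closedBall (x t p) r,
      ‖f y₂ q t - f y₁ q t‖ ≤ Ma * ‖y₂ - y₁‖ := by
    intro t ht q hq y₁ hy₁ y₂ hy₂
    refine (convex_closedBall _ _).norm_image_sub_le_of_norm_hasFDerivWithin_le
      (f := fun y => f y q t) (f' := fun y => (G (y, q, t)).1) (C := Ma) (fun y hy => ?_) (fun y hy => ?_) hy₁ hy₂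
    · exact (hdxf (y, q, t) (hVU' ⟨ht, Metric.mem_closedBall.1 hy, hq⟩)).hasFDerivWithinAt
    · exact hMa (y, q, t) ⟨ht, Metric.mem_closedBall.1 hy, hq⟩
  have key2 : ∀ t ∈ Set.Icc (0:ℝ) T, ∀ q₁ ∈ Metric.closedBall p r, ∀ q₂ ∈ Metric.closedBall p r,
      ‖f (x t p) q₂ t - f (x t p) q₁ t‖ ≤ Mb * ‖q₂ - q₁‖ := by
    intro t ht q₁ hq₁ q₂ hq₂
    refine (convex_closedBall _ _).norm_image_sub_le_of_norm_hasFDerivWithin_le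
      (f := fun q => f (x t p) q t) (f' := fun q => (G (x t p, q, t)).2) (C := Mb) (fun q hq => ?_) (fun q hq => ?_) hq₁ hq₂
    · exact (hdpf (x t p, q, t) (hVU' ⟨ht, by simpa using hr.le, Metric.mem_closedBall.1 hq⟩)).hasFDerivWithinAt
    · exact hMb (x t p, q, t) ⟨ht, by simpa using hr.le, Metric.mem_closedBall.1 hq⟩
  -- stability constant
  set C : ℝ := Mb / Ma * (Real.exp (Ma * T) - 1) with hCdef
  have hC0 : 0 ≤ C := by
    have := Real.one_le_exp (by positivity : (0:ℝ) ≤ Ma * T)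
    have := div_nonneg hMbpos.le hMapos.le
    nlinarith
  set δq : ℝ := min r (r / (2 * (C + 1))) with hδqdef
  have hδq : 0 < δq := lt_min hr (by positivity)
  -- stability of trajectories: Gronwall bootstrap
  have stab : ∀ h : Fin np → ℝ, ‖h‖ ≤ δq → ∀ t ∈ Set.Icc (0:ℝ) T,
      ‖x t (p + h) - x t p‖ ≤ C * ‖h‖ := by
    intro h hh
    set q : Fin np → ℝ := p + h with hqdef
    have hqph : q - p = h := by simp [hqdef]
    have hqp : dist q p = ‖h‖ := by rw [dist_eq_norm, hqph]
    have hqr : dist q p ≤ r := by rw [hqp]; exact hh.trans (min_le_left _ _)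
    set g : ℝ → Fin nx → ℝ := fun t => x t q - x t p with hgdef
    have hg0 : g 0 = 0 := by simp [hgdef, hinit q, hinit p]
    have hgc : ContinuousOn g (Set.Icc 0 T) := (hxc q).sub (hxc p)
    have hgd : ∀ t ∈ Set.Icc (0:ℝ) T,
        HasDerivAt g (f (x t q) q t - f (x t p) p t) t :=
      fun t ht => (hsol q t ht).sub (hsol p t ht)
    have hCh : C * ‖h‖ ≤ r / 2 := by
      have h2 : ‖h‖ ≤ r / (2 * (C + 1)) := hh.trans (min_le_right _ _)
      have h3 : C * ‖h‖ ≤ C * (r / (2 * (C + 1))) := mul_le_mul_of_nonneg_left h2 hC0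
      have h4 : C * (r / (2 * (C + 1))) ≤ r / 2 := by
        rw [mul_div_assoc', div_le_div_iff₀ (by positivity) (by norm_num)]
        nlinarith
      linarith
    set A : Set ℝ := {τ | τ ∈ Set.Icc (0:ℝ) T ∧ ∀ s ∈ Set.Icc (0:ℝ) τ, ‖g s‖ ≤ r} with hAdef
    have hA0 : (0:ℝ) ∈ A := by
      refine ⟨⟨le_refl _, hT0⟩, fun s hs => ?_⟩
      have hs0 : s = 0 := le_antisymm hs.2 hs.1
      simp [hs0, hg0, hr.le]
    have hAbdd : BddAbove A := ⟨T, fun τ hτ => hτ.1.2⟩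
    set τ' : ℝ := sSup A with hτdef
    have hτmem : τ' ∈ Set.Icc (0:ℝ) T :=
      ⟨le_csSup hAbdd hA0, csSup_le ⟨0, hA0⟩ (fun τ hτ => hτ.1.2)⟩
    have hbnd : ∀ s ∈ Set.Icc (0:ℝ) τ', ‖g s‖ ≤ r := by
      intro s hs
      rcases eq_or_lt_of_le hs.2 with heq | hlt
      · rcases eq_or_lt_of_le hs.1 with h0 | h0
        · simp [← h0, hg0, hr.le]
        · have hsIcc : s ∈ Set.Icc (0:ℝ) T := ⟨hs.1, heq.le.trans hτmem.2⟩
          have hsub : Set.Ico (0:ℝ) s ⊆ Set.Icc 0 T := fun u hu =>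
            ⟨hu.1, (le_of_lt hu.2).trans hsIcc.2⟩
          have hcw : ContinuousWithinAt (fun u => ‖g u‖) (Set.Ico (0:ℝ) s) s :=
            ((hgc s hsIcc).mono hsub).norm
          have hne : (nhdsWithin s (Set.Ico (0:ℝ) s)).NeBot := by
            rw [← mem_closure_iff_nhdsWithin_neBot, closure_Ico h0.ne]
            exact ⟨h0.le, le_refl s⟩
          refine le_of_tendsto hcw
            (Filter.eventually_of_mem self_mem_nhdsWithin (fun u hu => ?_))
          have hu' : u < τ' := lt_of_lt_of_le hu.2 heq.le
          obtain ⟨τ, hτA, huτ⟩ := exists_lt_of_lt_csSup ⟨0, hA0⟩ hu'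
          exact hτA.2 u ⟨hu.1, huτ.le⟩
      · obtain ⟨τ, hτA, hsτ⟩ := exists_lt_of_lt_csSup ⟨0, hA0⟩ hlt
        exact hτA.2 s ⟨hs.1, hsτ.le⟩
    have hgron : ∀ t ∈ Set.Icc (0:ℝ) τ', ‖g t‖ ≤ C * ‖h‖ := by
      intro t ht
      have key := norm_le_gronwallBound_of_norm_deriv_right_le (f := g)
        (f' := fun u => f (x u q) q u - f (x u p) p u) (δ := 0) (K := Ma) (ε := Mb * ‖h‖)
        (a := 0) (b := τ')
        (hgc.mono (Set.Icc_subset_Icc_right hτmem.2))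
        (fun u hu => (hgd u ⟨hu.1, hu.2.le.trans hτmem.2⟩).hasDerivWithinAt)
        (by simp [hg0]) ?_ t ht
      · rw [sub_zero] at key
        have hb := gronwall_aux (K := Ma) (ε := Mb * ‖h‖) (T := T) (t := t) hMapos
          (by positivity) ht.1 (ht.2.trans hτmem.2)
        refine key.trans (hb.trans (le_of_eq ?_))
        rw [hCdef]; ring
      · intro u hu
        have huI : u ∈ Set.Icc (0:ℝ) T := ⟨hu.1, hu.2.le.trans hτmem.2⟩
        have h1 : ‖f (x u q) q u - f (x u p) q u‖ ≤ Ma * ‖g u‖ := by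
          refine key1 u huI q hqr (x u p) (Metric.mem_closedBall_self hr.le) (x u q) ?_
          rw [Metric.mem_closedBall, dist_eq_norm]
          exact hbnd u ⟨hu.1, hu.2.le⟩
        have h2 : ‖f (x u p) q u - f (x u p) p u‖ ≤ Mb * ‖h‖ := by
          have := key2 u huI p (Metric.mem_closedBall_self hr.le) q
            (Metric.mem_closedBall.2 hqr)
          rwa [hqph] at this
        have htri := norm_add_le (f (x u q) q u - f (x u p) q u)
          (f (x u p) q u - f (x u p) p u)
        rw [sub_add_sub_cancel] at htri
        calc ‖f (x u q) q u - f (x u p) p u‖ ≤ _ := htri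
          _ ≤ Ma * ‖g u‖ + Mb * ‖h‖ := add_le_add h1 h2
    have hτT : τ' = T := by
      by_contra hne
      have hlt : τ' < T := lt_of_le_of_ne hτmem.2 hne
      have hgτ : ‖g τ'‖ ≤ r / 2 := (hgron τ' ⟨hτmem.1, le_refl _⟩).trans hCh
      have hgcont : ContinuousAt g τ' := (hgd τ' hτmem).continuousAt
      have hev : ∀ᶠ s in nhds τ', ‖g s‖ < r := by
        have htd : Filter.Tendsto (fun s => ‖g s‖) (nhds τ') (nhds ‖g τ'‖) :=
          (hgcont.norm).tendsto
        exact htd.eventually_lt_const (by linarith)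
      obtain ⟨η, hη, hball⟩ := Metric.eventually_nhds_iff.1 hev
      set τ'' : ℝ := min (τ' + η / 2) T with hτ''def
      have hτ''A : τ'' ∈ A := by
        refine ⟨⟨le_min (by linarith [hτmem.1]) hT0, min_le_right _ _⟩, fun s hs => ?_⟩
        rcases le_or_gt s τ' with hsle | hsgt
        · exact hbnd s ⟨hs.1, hsle⟩
        · refine (hball ?_).le
          rw [Real.dist_eq, abs_of_pos (by linarith)]
          have hs2 : s ≤ τ' + η / 2 := hs.2.trans (min_le_left _ _)
          linarith
      have hle : τ'' ≤ τ' := le_csSup hAbdd hτ''A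
      have hgt : τ' < τ'' := lt_min (by linarith) hlt
      linarith
    intro t ht
    exact hgron t (hτT ▸ ht)
  -- bound on lam
  obtain ⟨CL, hCL0, hCL⟩ : ∃ CL : ℝ, 0 ≤ CL ∧ ∀ t ∈ Set.Icc (0:ℝ) T, ∀ k i, |lam t k i| ≤ CL := by
    have hlc : ∀ k i, ContinuousOn (fun t => lam t k i) (Set.Icc 0 T) :=
      fun k i t ht => (hlam t ht k i).continuousAt.continuousWithinAt
    have hsum : ContinuousOn (fun t => ∑ k, ∑ i, |lam t k i|) (Set.Icc (0:ℝ) T) :=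
      continuousOn_finset_sum _ (fun k _ => continuousOn_finset_sum _ (fun i _ => (hlc k i).abs))
    obtain ⟨c, hc⟩ := isCompact_Icc.exists_bound_of_continuousOn hsum
    refine ⟨|c|, abs_nonneg c, fun t ht k i => ?_⟩
    have h1 : |lam t k i| ≤ ∑ i', |lam t k i'| :=
      Finset.single_le_sum (f := fun i' => |lam t k i'|)
        (fun _ _ => abs_nonneg _) (Finset.mem_univ i)
    have h2 : (∑ i', |lam t k i'|) ≤ ∑ k', ∑ i', |lam t k' i'| :=
      Finset.single_le_sum (f := fun k' => ∑ i', |lam t k' i'|)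
        (fun _ _ => Finset.sum_nonneg fun _ _ => abs_nonneg _) (Finset.mem_univ k)
    have h3 := hc t ht
    rw [Real.norm_eq_abs] at h3
    have h4 := le_abs_self (∑ k', ∑ i', |lam t k' i'|)
    have h5 := le_abs_self c
    linarith
  -- the candidate derivative matrix
  set Mm : Matrix (Fin nx) (Fin np) ℝ :=
    Matrix.of (fun i j => ∫ t in (0:ℝ)..T, ∑ k, lam t k i * dpf (x t p) p t k j) with hMmdef
  have hfd : HasFDerivAt (fun q => x T q) (LinearMap.toContinuousLinearMap Mm.mulVecLin) p := by
    rw [hasFDerivAt_iff_isLittleO_nhds_zero, Asymptotics.isLittleO_iff]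
    intro c hc
    set Cbig : ℝ := T * ((nx : ℝ) * CL) * (C + 1) + 1 with hCbigdef
    have hCbig : 0 < Cbig := by positivity
    set ε : ℝ := c / Cbig with hεdef
    have hε : 0 < ε := by positivity
    have hGu := hVcpt.uniformContinuousOn_of_continuous (hGc.mono hVU')
    rw [Metric.uniformContinuousOn_iff] at hGu
    obtain ⟨δ0, hδ0, hδuc⟩ := hGu ε hε
    set δ' : ℝ := min (δ0 / 2) r with hδ'def
    have hδ' : 0 < δ' := lt_min (by linarith) hr
    have hδ'r : δ' ≤ r := min_le_right _ _
    have hδ'δ0 : δ' < δ0 := lt_of_le_of_lt (min_le_left _ _) (by linarith)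
    have hVmem : ∀ t ∈ Set.Icc (0:ℝ) T, ∀ q, dist q p ≤ δ' → ∀ y, dist y (x t p) ≤ δ' →
        (y, q, t) ∈ V := fun t ht q hq y hy => ⟨ht, hy.trans hδ'r, hq.trans hδ'r⟩
    have hGdist : ∀ t ∈ Set.Icc (0:ℝ) T, ∀ q, dist q p ≤ δ' → ∀ y, dist y (x t p) ≤ δ' →
        dist (G (y, q, t)) (G (x t p, p, t)) < ε := by
      intro t ht q hq y hy
      refine hδuc _ (hVmem t ht q hq y hy) _ (hVtraj t ht) ?_
      rw [Prod.dist_eq, Prod.dist_eq]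
      simp only [dist_self]
      exact lt_of_le_of_lt (max_le hy (max_le hq hδ'.le)) hδ'δ0
    have key1' : ∀ t ∈ Set.Icc (0:ℝ) T, ∀ q, dist q p ≤ δ' → ∀ y, dist y (x t p) ≤ δ' →
        ‖f y q t - f (x t p) q t - (G (x t p, p, t)).1 (y - x t p)‖ ≤ ε * ‖y - x t p‖ := by
      intro t ht q hq y hy
      refine (convex_closedBall (x t p) δ').norm_image_sub_le_of_norm_hasFDerivWithin_le'
        (f := fun y => f y q t) (f' := fun y => (G (y, q, t)).1) (φ := (G (x t p, p, t)).1)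
        (C := ε) (fun y' hy' => ?_) (fun y' hy' => ?_)
        (Metric.mem_closedBall_self hδ'.le) (Metric.mem_closedBall.2 hy)
      · exact (hdxf (y', q, t) (hVU' (hVmem t ht q hq y'
          (Metric.mem_closedBall.1 hy')))).hasFDerivWithinAt
      · have := hGdist t ht q hq y' (Metric.mem_closedBall.1 hy')
        rw [Prod.dist_eq] at this
        have h4 := lt_of_le_of_lt (le_max_left _ _) this
        rw [dist_eq_norm] at h4
        exact h4.le
    have key2' : ∀ t ∈ Set.Icc (0:ℝ) T, ∀ q, dist q p ≤ δ' →
        ‖f (x t p) q t - f (x t p) p t - (G (x t p, p, t)).2 (q - p)‖ ≤ ε * ‖q - p‖ := by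
      intro t ht q hq
      refine (convex_closedBall p δ').norm_image_sub_le_of_norm_hasFDerivWithin_le'
        (f := fun q' => f (x t p) q' t) (f' := fun q' => (G (x t p, q', t)).2)
        (φ := (G (x t p, p, t)).2) (C := ε) (fun q' hq' => ?_) (fun q' hq' => ?_)
        (Metric.mem_closedBall_self hδ'.le) (Metric.mem_closedBall.2 hq)
      · exact (hdpf (x t p, q', t) (hVU' (hVmem t ht q' (Metric.mem_closedBall.1 hq')
          (x t p) (by simpa using hδ'.le)))).hasFDerivWithinAt
      · have := hGdist t ht q' (Metric.mem_closedBall.1 hq') (x t p) (by simpa using hδ'.le)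
        rw [Prod.dist_eq] at this
        have h4 := lt_of_le_of_lt (le_max_right _ _) this
        rw [dist_eq_norm] at h4
        exact h4.le
    set δh : ℝ := min δq (min δ' (δ' / (C + 1))) with hδhdef
    have hδh : 0 < δh := lt_min hδq (lt_min hδ' (by positivity))
    filter_upwards [Metric.closedBall_mem_nhds (0 : Fin np → ℝ) hδh] with h hmem
    have hhn : ‖h‖ ≤ δh := by rwa [Metric.mem_closedBall, dist_zero_right] at hmem
    set q : Fin np → ℝ := p + h with hqdef
    have hqph : q - p = h := by simp [hqdef]
    have hh1 : ‖h‖ ≤ δq := hhn.trans (min_le_left _ _)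
    have hh2 : ‖h‖ ≤ δ' := hhn.trans ((min_le_right _ _).trans (min_le_left _ _))
    have hh3 : ‖h‖ ≤ δ' / (C + 1) := hhn.trans ((min_le_right _ _).trans (min_le_right _ _))
    have hstab := stab h hh1
    have hgδ : ∀ t ∈ Set.Icc (0:ℝ) T, ‖x t q - x t p‖ ≤ δ' := by
      intro t ht
      refine (hstab t ht).trans ?_
      have h5 : C * ‖h‖ ≤ C * (δ' / (C + 1)) := mul_le_mul_of_nonneg_left hh3 hC0
      have h4 : C * (δ' / (C + 1)) ≤ δ' := by
        rw [mul_div_assoc', div_le_iff₀ (by positivity)]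
        nlinarith
      linarith
    have hqpδ : dist q p ≤ δ' := by rw [dist_eq_norm, hqph]; exact hh2
    have hres : ∀ t ∈ Set.Icc (0:ℝ) T,
        ‖f (x t q) q t - f (x t p) p t - (dxf (x t p) p t).mulVec (x t q - x t p)
          - (dpf (x t p) p t).mulVec h‖ ≤ ε * (C + 1) * ‖h‖ := by
      intro t ht
      have e1 := key1' t ht q hqpδ (x t q) (by rw [dist_eq_norm]; exact hgδ t ht)
      have e2 := key2' t ht q hqpδ
      rw [hqph] at e2
      have hG1 : (G (x t p, p, t)).1 (x t q - x t p)
          = (dxf (x t p) p t).mulVec (x t q - x t p) := rfl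
      have hG2 : (G (x t p, p, t)).2 h = (dpf (x t p) p t).mulVec h := rfl
      rw [hG1] at e1
      rw [hG2] at e2
      have heq : f (x t q) q t - f (x t p) p t - (dxf (x t p) p t).mulVec (x t q - x t p)
          - (dpf (x t p) p t).mulVec h
          = (f (x t q) q t - f (x t p) q t - (dxf (x t p) p t).mulVec (x t q - x t p))
            + (f (x t p) q t - f (x t p) p t - (dpf (x t p) p t).mulVec h) := by abel
      rw [heq]
      refine (norm_add_le _ _).trans ?_
      have e1' : ε * ‖x t q - x t p‖ ≤ ε * (C * ‖h‖) :=
        mul_le_mul_of_nonneg_left (hstab t ht) hε.le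
      nlinarith [e1, e2, e1']
    -- continuity pieces
    have hABc : ContinuousOn (fun t => (dxf (x t p) p t, dpf (x t p) p t)) (Set.Icc (0:ℝ) T) :=
      hcont.comp htrajc (fun t ht => hUtraj t ht)
    have hlc : ∀ k i', ContinuousOn (fun t => lam t k i') (Set.Icc (0:ℝ) T) :=
      fun k i' t ht => (hlam t ht k i').continuousAt.continuousWithinAt
    have hAc : ∀ k m, ContinuousOn (fun t => dxf (x t p) p t k m) (Set.Icc (0:ℝ) T) := by
      intro k m
      have h1 : Continuous (fun v : Matrix (Fin nx) (Fin nx) ℝ × Matrix (Fin nx) (Fin np) ℝ =>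
          v.1 k m) := (continuous_apply m).comp ((continuous_apply k).comp continuous_fst)
      exact h1.comp_continuousOn hABc
    have hBc : ∀ k j, ContinuousOn (fun t => dpf (x t p) p t k j) (Set.Icc (0:ℝ) T) := by
      intro k j
      have h1 : Continuous (fun v : Matrix (Fin nx) (Fin nx) ℝ × Matrix (Fin nx) (Fin np) ℝ =>
          v.2 k j) := (continuous_apply j).comp ((continuous_apply k).comp continuous_snd)
      exact h1.comp_continuousOn hABc
    have hxkc : ∀ (q' : Fin np → ℝ) k, ContinuousOn (fun t => x t q' k) (Set.Icc (0:ℝ) T) :=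
      fun q' k => (continuous_apply k).comp_continuousOn (hxc q')
    have hFkc : ∀ (q' : Fin np → ℝ) k, ContinuousOn (fun t => f (x t q') q' t k)
        (Set.Icc (0:ℝ) T) := fun q' k => (continuous_apply k).comp_continuousOn (hFc q')
    -- coordinatewise estimate via the adjoint and FTC
    have hcoord : ∀ i : Fin nx, |x T q i - x T p i - Mm.mulVec h i|
        ≤ (T * ((nx:ℝ) * CL) * (C + 1)) * ε * ‖h‖ := by
      intro i
      set φ : ℝ → ℝ := fun t => ∑ k, lam t k i * (x t q k - x t p k) with hφdef
      set φ' : ℝ → ℝ := fun t => ∑ k, ((-((dxf (x t p) p t)ᵀ * lam t)) k i * (x t q k - x t p k)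
        + lam t k i * (f (x t q) q t k - f (x t p) p t k)) with hφ'def
      have hφd : ∀ t ∈ Set.uIcc (0:ℝ) T, HasDerivAt φ (φ' t) t := by
        intro t ht
        rw [hIcc] at ht
        refine HasDerivAt.fun_sum (fun k _ => ?_)
        have h1 : HasDerivAt (fun s => lam s k i)
            ((-((dxf (x t p) p t)ᵀ * lam t)) k i) t := hlam t ht k i
        have h2 : HasDerivAt (fun s => x s q k - x s p k)
            (f (x t q) q t k - f (x t p) p t k) t :=
          ((hasDerivAt_pi.1 (hsol q t ht)) k).sub ((hasDerivAt_pi.1 (hsol p t ht)) k)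
        exact h1.mul h2
      have hφ'c : ContinuousOn φ' (Set.Icc (0:ℝ) T) := by
        refine continuousOn_finset_sum _ (fun k _ => ContinuousOn.add ?_ ?_)
        · refine ContinuousOn.mul ?_ ((hxkc q k).sub (hxkc p k))
          have hrw : (fun t => (-((dxf (x t p) p t)ᵀ * lam t)) k i)
              = fun t => -∑ m, dxf (x t p) p t m k * lam t m i := by
            funext t; simp [Matrix.mul_apply, Matrix.transpose_apply]
          rw [hrw]
          exact (continuousOn_finset_sum _ (fun m _ => (hAc m k).mul (hlc m i))).neg
        · exact (hlc k i).mul ((hFkc q k).sub (hFkc p k))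
      have hintφ' : IntervalIntegrable φ' MeasureTheory.volume 0 T := by
        apply ContinuousOn.intervalIntegrable; rwa [hIcc]
      have hFTC : ∫ t in (0:ℝ)..T, φ' t = φ T - φ 0 :=
        intervalIntegral.integral_eq_sub_of_hasDerivAt hφd hintφ'
      have hφT : φ T = x T q i - x T p i := by
        simp [hφdef, hlamT, Matrix.one_apply]
      have hφ0 : φ 0 = 0 := by simp [hφdef, hinit q, hinit p]
      set ψ : ℝ → ℝ := fun t => ∑ j, (∑ k, lam t k i * dpf (x t p) p t k j) * h j with hψdef
      have hψc : ContinuousOn ψ (Set.Icc (0:ℝ) T) :=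
        continuousOn_finset_sum _ (fun j _ => (continuousOn_finset_sum _
          (fun k _ => (hlc k i).mul (hBc k j))).mul continuousOn_const)
      have hintψ : IntervalIntegrable ψ MeasureTheory.volume 0 T := by
        apply ContinuousOn.intervalIntegrable; rwa [hIcc]
      have hMh : Mm.mulVec h i = ∫ t in (0:ℝ)..T, ψ t := by
        have hint : ∀ j ∈ Finset.univ, IntervalIntegrable
            (fun t => (∑ k, lam t k i * dpf (x t p) p t k j) * h j)
            MeasureTheory.volume 0 T := by
          intro j _
          apply ContinuousOn.intervalIntegrable
          rw [hIcc]
          exact (continuousOn_finset_sum _ (fun k _ => (hlc k i).mul (hBc k j))).mul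
            continuousOn_const
        have hL : Mm.mulVec h i = ∑ j, Mm i j * h j := by
          simp [Matrix.mulVec, dotProduct]
        simp only [hψdef]
        rw [hL, intervalIntegral.integral_finset_sum hint]
        refine Finset.sum_congr rfl (fun j _ => ?_)
        rw [intervalIntegral.integral_mul_const]
        congr 1
      have hdiff : x T q i - x T p i - Mm.mulVec h i = ∫ t in (0:ℝ)..T, (φ' t - ψ t) := by
        rw [intervalIntegral.integral_sub hintφ' hintψ, hFTC, hφT, hφ0, ← hMh]; ring
      rw [hdiff]
      have hbound : ∀ t ∈ Set.uIoc (0:ℝ) T,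
          ‖φ' t - ψ t‖ ≤ ((nx:ℝ) * CL) * (ε * (C + 1) * ‖h‖) := by
        intro t ht
        have htI : t ∈ Set.Icc (0:ℝ) T := by
          rw [Set.uIoc_of_le hT0] at ht; exact ⟨ht.1.le, ht.2⟩
        have hid : φ' t - ψ t = ∑ k, lam t k i *
            ((f (x t q) q t - f (x t p) p t - (dxf (x t p) p t).mulVec (x t q - x t p)
              - (dpf (x t p) p t).mulVec h) k) := by
          have e1 : ∑ k, (-((dxf (x t p) p t)ᵀ * lam t)) k i * (x t q k - x t p k)
              = -∑ m, lam t m i * ((dxf (x t p) p t).mulVec (x t q - x t p) m) := by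
            simp only [Matrix.neg_apply, Matrix.mul_apply, Matrix.transpose_apply,
              Matrix.mulVec, dotProduct, Pi.sub_apply]
            trans (∑ k, ∑ m, -(dxf (x t p) p t m k * lam t m i * (x t q k - x t p k)))
            · refine Finset.sum_congr rfl (fun k _ => ?_)
              rw [neg_mul, Finset.sum_mul]
              exact (Finset.sum_neg_distrib _).symm
            · rw [Finset.sum_comm, ← Finset.sum_neg_distrib]
              refine Finset.sum_congr rfl (fun m _ => ?_)
              rw [Finset.mul_sum, ← Finset.sum_neg_distrib]
              exact Finset.sum_congr rfl (fun k _ => by ring)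
          have e2 : ψ t = ∑ k, lam t k i * ((dpf (x t p) p t).mulVec h k) := by
            simp only [hψdef, Matrix.mulVec, dotProduct]
            trans (∑ j, ∑ k, lam t k i * dpf (x t p) p t k j * h j)
            · exact Finset.sum_congr rfl (fun j _ => Finset.sum_mul _ _ _)
            · rw [Finset.sum_comm]
              refine Finset.sum_congr rfl (fun k _ => ?_)
              rw [Finset.mul_sum]
              exact Finset.sum_congr rfl (fun j _ => by ring)
          simp only [hφ'def]
          rw [Finset.sum_add_distrib, e1, e2]
          simp only [Pi.sub_apply, mul_sub, Finset.sum_sub_distrib]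
          ring
        rw [hid, Real.norm_eq_abs]
        refine (Finset.abs_sum_le_sum_abs _ _).trans ?_
        have hterm : ∀ k : Fin nx, |lam t k i *
            ((f (x t q) q t - f (x t p) p t - (dxf (x t p) p t).mulVec (x t q - x t p)
              - (dpf (x t p) p t).mulVec h) k)| ≤ CL * (ε * (C + 1) * ‖h‖) := by
          intro k
          rw [abs_mul]
          refine mul_le_mul (hCL t htI k i) ?_ (abs_nonneg _) hCL0
          refine le_trans ?_ (hres t htI)
          simpa using (norm_le_pi_norm (f (x t q) q t - f (x t p) p t
            - (dxf (x t p) p t).mulVec (x t q - x t p) - (dpf (x t p) p t).mulVec h) k)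
        calc ∑ k, |lam t k i * _| ≤ ∑ _k : Fin nx, CL * (ε * (C + 1) * ‖h‖) :=
              Finset.sum_le_sum (fun k _ => hterm k)
          _ = (nx:ℝ) * (CL * (ε * (C + 1) * ‖h‖)) := by
              rw [Finset.sum_const, Finset.card_univ, Fintype.card_fin, nsmul_eq_mul]
          _ = ((nx:ℝ) * CL) * (ε * (C + 1) * ‖h‖) := by ring
      have hib := intervalIntegral.norm_integral_le_of_norm_le_const hbound
      rw [Real.norm_eq_abs] at hib
      refine hib.trans (le_of_eq ?_)
      rw [sub_zero, abs_of_pos hT]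
      ring
    have hcc : 0 ≤ c * ‖h‖ := by positivity
    rw [pi_norm_le_iff_of_nonneg hcc]
    intro i
    have hcomp : (x T (p + h) - x T p - (LinearMap.toContinuousLinearMap Mm.mulVecLin) h) i
        = x T q i - x T p i - Mm.mulVec h i := by
      simp [Pi.sub_apply, LinearMap.coe_toContinuousLinearMap', Matrix.mulVecLin_apply, hqdef]
    rw [Real.norm_eq_abs, hcomp]
    refine (hcoord i).trans ?_
    have h1 : (T * ((nx:ℝ) * CL) * (C + 1)) * ε ≤ Cbig * ε :=
      mul_le_mul_of_nonneg_right (by rw [hCbigdef]; linarith) hε.le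
    have h2 : Cbig * ε = c := by rw [hεdef]; field_simp
    exact mul_le_mul_of_nonneg_right (h1.trans_eq h2) (norm_nonneg h)
  refine ⟨hfd.differentiableAt, fun i j => ?_⟩
  rw [hfd.fderiv]
  have h1 : (LinearMap.toContinuousLinearMap Mm.mulVecLin).toLinearMap = Mm.mulVecLin :=
    rfl
  rw [h1, ← Matrix.toLin'_apply', LinearMap.toMatrix'_toLin']
  simp only [Matrix.transpose_apply, hMmdef, Matrix.of_apply]
  refine intervalIntegral.integral_congr (fun t ht => ?_)
  simp [Matrix.mul_apply, Matrix.transpose_apply, mul_comm]
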